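/- Let W' := {w ∈ W : w⁻¹·α ∈ R⁺ for every α ∈ J₀}. Then for every w ∈ W', the set S_w⁻ is empty if and only if w = 1. -/

import Mathlib

open scoped RealInnerProductSpace

variable {V : Type*} [NormedAddCommGroup V] [InnerProductSpace ℝ V]

/-- The orthogonal reflection `s_α` in the hyperplane perpendicular to `α`,
`s_α x = x - (2⟪x,α⟫/⟪α,α⟫) • α`, as a linear map. -/
noncomputable def reflMap (α : V) : V →ₗ[ℝ] V where
  toFun x := x - (2 * ⟪x, α⟫ / ⟪α, α⟫) • α
  map_add' x y := by
    rw [inner_add_left,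
      show 2 * (⟪x, α⟫ + ⟪y, α⟫) / ⟪α, α⟫
          = 2 * ⟪x, α⟫ / ⟪α, α⟫ + 2 * ⟪y, α⟫ / ⟪α, α⟫ by ring,
      add_smul]
    abel
  map_smul' c x := by
    rw [RingHom.id_apply, real_inner_smul_left, smul_sub,
      show 2 * (c * ⟪x, α⟫) / ⟪α, α⟫ = c * (2 * ⟪x, α⟫ / ⟪α, α⟫) by ring,
      mul_smul]

/-- A finite reduced (crystallographic) root system `R` spanning `V`. -/
structure IsRootSystem (R : Set V) : Prop where
  finite : R.Finite
  zero_not_mem : (0 : V) ∉ R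
  span_top : Submodule.span ℝ R = ⊤
  refl_mem : ∀ α ∈ R, ∀ β ∈ R, reflMap α β ∈ R
  reduced : ∀ α ∈ R, ∀ c : ℝ, c • α ∈ R → c = 1 ∨ c = -1
  crystallographic : ∀ α ∈ R, ∀ β ∈ R, ∃ n : ℤ, 2 * ⟪β, α⟫ / ⟪α, α⟫ = (n : ℝ)

/-- The set `R⁺` of positive roots with respect to a base `Δ`: the roots that are
nonnegative integer combinations of the elements of `Δ`. -/
def posRoots (R Δ : Set V) : Set V :=
  {α ∈ R | α ∈ AddSubmonoid.closure Δ}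

/-- `Δ` is a base (system of simple roots) of the root system `R`: a linearly
independent subset of `R` such that every root lies in exactly one of `R⁺`, `-R⁺`. -/
structure IsBase (R Δ : Set V) : Prop where
  subset : Δ ⊆ R
  indep : LinearIndependent ℝ ((↑) : Δ → V)
  pos_xor_neg : ∀ α ∈ R, Xor' (α ∈ posRoots R Δ) (-α ∈ posRoots R Δ)

/-- The subgroup of `GL(V)` generated by the reflections `s_α` for `α ∈ S`.
For `S = R` this is the Weyl group `W`; for `S = J ⊆ Δ` this is the subgroup `W_J`. -/
def weylGroup (S : Set V) : Subgroup (V ≃ₗ[ℝ] V) :=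
  Subgroup.closure {g | ∃ α ∈ S, ∀ x, g x = reflMap α x}

/-- The set `R_J := R ∩ span_ℝ(J)`. -/
def rootsIn (R J : Set V) : Set V :=
  R ∩ (Submodule.span ℝ J : Submodule ℝ V)

/-- `S_w⁺ := {α ∈ Δ : w·α ∈ R⁺ and w·α ∉ R_{J₀}}`. -/
def Spos (R Δ J₀ : Set V) (w : V ≃ₗ[ℝ] V) : Set V :=
  {α ∈ Δ | w α ∈ posRoots R Δ ∧ w α ∉ rootsIn R J₀}

/-- `S_w⁻ := {α ∈ Δ : w·α ∈ -R⁺ and w·α ∉ R_{J₀}}`. -/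
def Sneg (R Δ J₀ : Set V) (w : V ≃ₗ[ℝ] V) : Set V :=
  {α ∈ Δ | -(w α) ∈ posRoots R Δ ∧ w α ∉ rootsIn R J₀}

namespace SnegAux

lemma reflMap_apply (α x : V) : reflMap α x = x - (2 * ⟪x, α⟫ / ⟪α, α⟫) • α := rfl

lemma reflMap_zero' (x : V) : reflMap (0 : V) x = x := by
  simp [reflMap_apply]

lemma reflMap_involutive (α : V) : Function.Involutive (reflMap α) := by
  intro x
  rcases eq_or_ne α 0 with rfl | hα
  · simp [reflMap_apply]
  · have h : ⟪α, α⟫ ≠ 0 := inner_self_ne_zero.mpr hα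
    rw [reflMap_apply, reflMap_apply, inner_sub_left, real_inner_smul_left,
      show 2 * (⟪x, α⟫ - 2 * ⟪x, α⟫ / ⟪α, α⟫ * ⟪α, α⟫) / ⟪α, α⟫
          = -(2 * ⟪x, α⟫ / ⟪α, α⟫) by field_simp; ring,
      neg_smul]
    abel

lemma reflMap_inner (α x y : V) : ⟪reflMap α x, reflMap α y⟫ = ⟪x, y⟫ := by
  rcases eq_or_ne α 0 with rfl | hα
  · simp [reflMap_apply]
  · have h : ⟪α, α⟫ ≠ 0 := inner_self_ne_zero.mpr hα
    rw [reflMap_apply, reflMap_apply, inner_sub_left, inner_sub_right, inner_sub_right,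
      real_inner_smul_left, real_inner_smul_left, real_inner_smul_right,
      real_inner_smul_right, real_inner_comm α y]
    field_simp
    ring

lemma reflMap_self (α : V) : reflMap α α = -α := by
  rcases eq_or_ne α 0 with rfl | hα
  · simp [reflMap_apply]
  · have h : ⟪α, α⟫ ≠ 0 := inner_self_ne_zero.mpr hα
    rw [reflMap_apply, show 2 * ⟪α, α⟫ / ⟪α, α⟫ = 2 by field_simp]
    rw [two_smul]; abel

lemma reflMap_neg (α x : V) : reflMap (-α) x = reflMap α x := by
  rcases eq_or_ne α 0 with rfl | hα
  · simp
  · simp only [reflMap_apply, inner_neg_right, inner_neg_left, inner_neg_neg, mul_neg, neg_div, neg_smul,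
      smul_neg, neg_neg]

/-- reflection as a linear equivalence -/
noncomputable def sE (α : V) : V ≃ₗ[ℝ] V :=
  LinearEquiv.ofInvolutive (reflMap α) (reflMap_involutive α)

@[simp] lemma sE_apply (α x : V) : sE α x = reflMap α x := rfl

lemma mul_apply (e₁ e₂ : V ≃ₗ[ℝ] V) (x : V) : (e₁ * e₂) x = e₁ (e₂ x) := rfl
lemma one_apply (x : V) : (1 : V ≃ₗ[ℝ] V) x = x := rfl
lemma inv_eq_symm (e : V ≃ₗ[ℝ] V) : e⁻¹ = e.symm := rfl

lemma sE_inv (α : V) : (sE α)⁻¹ = sE α := by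
  apply LinearEquiv.ext
  intro x
  apply (sE α).injective
  rw [inv_eq_symm, LinearEquiv.apply_symm_apply]
  exact (reflMap_involutive α x).symm

lemma sE_mul_self (α : V) : sE α * sE α = 1 := by
  nth_rewrite 2 [← sE_inv α]
  exact mul_inv_cancel _

lemma sE_neg (α : V) : sE (-α) = sE α :=
  LinearEquiv.ext fun x => reflMap_neg α x

end SnegAux

namespace SnegAux

variable {R Δ S : Set V}

lemma sE_mem (hα : α ∈ S) : sE α ∈ weylGroup S :=
  Subgroup.subset_closure ⟨α, hα, fun _ => rfl⟩

lemma gen_eq {g : V ≃ₗ[ℝ] V} (h : ∀ x, g x = reflMap α x) : g = sE α :=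
  LinearEquiv.ext h

lemma weyl_inner {w : V ≃ₗ[ℝ] V} (hw : w ∈ weylGroup S) (x y : V) :
    ⟪w x, w y⟫ = ⟪x, y⟫ := by
  revert x y
  induction hw using Subgroup.closure_induction with
  | mem g hg =>
    obtain ⟨α, -, hgα⟩ := hg
    intro x y
    rw [hgα, hgα, reflMap_inner]
  | one => intro x y; rfl
  | mul g h _ _ ihg ihh => intro x y; rw [mul_apply, mul_apply, ihg, ihh]
  | inv g _ ih =>
    intro x y
    rw [← ih (g⁻¹ x) (g⁻¹ y), ← mul_apply, ← mul_apply, mul_inv_cancel, one_apply, one_apply]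

lemma weyl_root (hR : IsRootSystem R) {w : V ≃ₗ[ℝ] V} (hw : w ∈ weylGroup R) :
    ∀ β ∈ R, w β ∈ R := by
  have key : (∀ β ∈ R, w β ∈ R) ∧ (∀ β ∈ R, w⁻¹ β ∈ R) := by
    induction hw using Subgroup.closure_induction with
    | mem g hg =>
      obtain ⟨α, hα, hgα⟩ := hg
      have hg' : g = sE α := gen_eq hgα
      have h1 : ∀ β ∈ R, g β ∈ R := by
        intro β hβ; rw [hgα]; exact hR.refl_mem α hα β hβ
      refine ⟨h1, ?_⟩
      rw [hg', sE_inv]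
      intro β hβ
      exact hR.refl_mem α hα β hβ
    | one => exact ⟨fun β hβ => hβ, fun β hβ => hβ⟩
    | mul g h hg hh ihg ihh =>
      refine ⟨fun β hβ => ?_, fun β hβ => ?_⟩
      · rw [mul_apply]; exact ihg.1 _ (ihh.1 _ hβ)
      · rw [mul_inv_rev, mul_apply]; exact ihh.2 _ (ihg.2 _ hβ)
    | inv g hg ih => exact ⟨fun β hβ => ih.2 β hβ, fun β hβ => by rw [inv_inv]; exact ih.1 β hβ⟩
  exact key.1

lemma weyl_root_inv (hR : IsRootSystem R) {w : V ≃ₗ[ℝ] V} (hw : w ∈ weylGroup R) :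
    ∀ β ∈ R, w⁻¹ β ∈ R := weyl_root hR (inv_mem hw)

lemma sE_conj {w : V ≃ₗ[ℝ] V} (hw : w ∈ weylGroup S) (γ : V) :
    sE (w γ) = w * sE γ * w⁻¹ := by
  apply LinearEquiv.ext
  intro x
  have h1 : ⟪w γ, w γ⟫ = ⟪γ, γ⟫ := weyl_inner hw γ γ
  have h2 : ⟪x, w γ⟫ = ⟪w⁻¹ x, γ⟫ := by
    conv_lhs => rw [show x = w (w⁻¹ x) by rw [← mul_apply, mul_inv_cancel, one_apply]]
    exact weyl_inner hw _ _
  rw [mul_apply, mul_apply, sE_apply, sE_apply, reflMap_apply, reflMap_apply,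
    map_sub, map_smul, h1, h2]
  rw [show w (w⁻¹ x) = x by rw [← mul_apply, mul_inv_cancel, one_apply]]

end SnegAux

namespace SnegAux

variable {R Δ J₀ : Set V}

lemma root_ne_zero (hR : IsRootSystem R) (hβ : β ∈ R) : β ≠ 0 :=
  fun h => hR.zero_not_mem (h ▸ hβ)

lemma mem_posRoots (hΔ : IsBase R Δ) (hα : α ∈ Δ) : α ∈ posRoots R Δ :=
  ⟨hΔ.subset hα, AddSubmonoid.subset_closure hα⟩

lemma neg_not_pos (hΔ : IsBase R Δ) (hβ : β ∈ posRoots R Δ) : -β ∉ posRoots R Δ := by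
  have h := hΔ.pos_xor_neg β hβ.1
  rcases h with ⟨-, h⟩ | ⟨-, h⟩
  · exact h
  · exact absurd hβ h

lemma pos_or_neg (hΔ : IsBase R Δ) (hβ : β ∈ R) :
    β ∈ posRoots R Δ ∨ -β ∈ posRoots R Δ := by
  rcases hΔ.pos_xor_neg β hβ with ⟨h, -⟩ | ⟨h, -⟩
  · exact Or.inl h
  · exact Or.inr h

/-- A linear functional equal to `1` on every element of the extended basis that lies in `Δ`. -/
noncomputable def posFun (hΔ : IsBase R Δ) : V →ₗ[ℝ] ℝ := by
  classical
  exact (Module.Basis.extend (linearIndependent_subtype_iff.mp hΔ.indep)).constr ℝ (fun i => if (i : V) ∈ Δ then 1 else 0)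

lemma posFun_eq_one (hΔ : IsBase R Δ) (hα : α ∈ Δ) : posFun hΔ α = 1 := by
  classical
  have hmem : α ∈ (linearIndependent_subtype_iff.mp hΔ.indep).extend (Set.subset_univ Δ) :=
    Module.Basis.subset_extend (linearIndependent_subtype_iff.mp hΔ.indep) hα
  have : (Module.Basis.extend (linearIndependent_subtype_iff.mp hΔ.indep)) ⟨α, hmem⟩ = α :=
    Module.Basis.extend_apply_self _ _
  rw [posFun, ← this, Module.Basis.constr_basis]
  simp [hα]

lemma posFun_pos_of_closure (hΔ : IsBase R Δ) (hβ : β ∈ AddSubmonoid.closure Δ)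
    (hne : β ≠ 0) : 0 < posFun hΔ β := by
  have : β = 0 ∨ 0 < posFun hΔ β := by
    clear hne
    induction hβ using AddSubmonoid.closure_induction with
    | mem x hx => exact Or.inr (by rw [posFun_eq_one hΔ hx]; norm_num)
    | zero => exact Or.inl rfl
    | add x y _ _ ihx ihy =>
      rcases ihx with rfl | ihx
      · rcases ihy with rfl | ihy
        · exact Or.inl (by rw [add_zero])
        · exact Or.inr (by rwa [map_add, map_zero, zero_add])
      · rcases ihy with rfl | ihy
        · exact Or.inr (by rwa [map_add, map_zero, add_zero])
        · exact Or.inr (by rw [map_add]; positivity)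
  tauto

lemma posFun_pos (hR : IsRootSystem R) (hΔ : IsBase R Δ) (hβ : β ∈ posRoots R Δ) :
    0 < posFun hΔ β :=
  posFun_pos_of_closure hΔ hβ.2 (root_ne_zero hR hβ.1)

lemma posRoot_iff (hR : IsRootSystem R) (hΔ : IsBase R Δ) (hβ : β ∈ R) :
    β ∈ posRoots R Δ ↔ 0 < posFun hΔ β := by
  constructor
  · exact posFun_pos hR hΔ
  · intro h
    rcases pos_or_neg hΔ hβ with h' | h'
    · exact h'
    · exfalso
      have := posFun_pos hR hΔ h'
      rw [map_neg] at this
      linarith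

/-- representation of an element of the additive closure of `Δ` as a nonnegative
finitely-supported combination -/
lemma exists_repr (hβ : β ∈ AddSubmonoid.closure Δ) :
    ∃ c : V →₀ ℝ, ↑c.support ⊆ Δ ∧ (∀ γ, 0 ≤ c γ) ∧
      Finsupp.linearCombination ℝ id c = β := by
  induction hβ using AddSubmonoid.closure_induction with
  | mem x hx =>
    refine ⟨Finsupp.single x 1, ?_, ?_, ?_⟩
    · exact fun y hy => by
        have := Finsupp.support_single_subset (a := x) (b := (1:ℝ)) hy
        simp only [Finset.mem_singleton] at this
        exact this ▸ hx
    · intro γ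
      classical
      rw [Finsupp.single_apply]
      split <;> norm_num
    · simp [Finsupp.linearCombination_single]
  | zero => exact ⟨0, by simp, fun γ => le_refl 0, by simp⟩
  | add x y _ _ ihx ihy =>
    obtain ⟨c, hc1, hc2, hc3⟩ := ihx
    obtain ⟨d, hd1, hd2, hd3⟩ := ihy
    refine ⟨c + d, ?_, fun γ => by simpa using add_nonneg (hc2 γ) (hd2 γ), by
      rw [map_add, hc3, hd3]⟩
    intro γ hγ
    classical
    have hγ' : γ ∈ (c + d).support := hγ
    have := Finsupp.support_add (g₁ := c) (g₂ := d) hγ'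
    rcases Finset.mem_union.mp this with h | h
    · exact hc1 h
    · exact hd1 h

lemma repr_unique (hΔ : IsBase R Δ) {c d : V →₀ ℝ} (hc : ↑c.support ⊆ Δ)
    (hd : ↑d.support ⊆ Δ)
    (h : Finsupp.linearCombination ℝ id c = Finsupp.linearCombination ℝ id d) : c = d := by
  have key := linearIndepOn_iff.mp (linearIndependent_subtype_iff.mp hΔ.indep) (c - d) ?_ ?_
  · exact sub_eq_zero.mp key
  · rw [Finsupp.mem_supported]
    refine Set.Subset.trans ?_ (Set.union_subset hc hd)
    intro x hx
    classical
    have hx' : x ∈ (c - d).support := hx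
    have h2 := Finsupp.support_sub (f := c) (g := d) hx'
    rw [← Finset.coe_union]
    exact_mod_cast h2
  · rw [map_sub, h, sub_self]

end SnegAux

namespace SnegAux

variable {R Δ J₀ : Set V}

lemma eq_of_reflMap_not_pos (hR : IsRootSystem R) (hΔ : IsBase R Δ)
    (hα : α ∈ Δ) (hβ : β ∈ posRoots R Δ) (h : reflMap α β ∉ posRoots R Δ) : β = α := by
  classical
  have hαR : α ∈ R := hΔ.subset hα
  have hβR : β ∈ R := hβ.1
  have hrefl : reflMap α β ∈ R := hR.refl_mem α hαR β hβR
  have hneg : -(reflMap α β) ∈ posRoots R Δ := by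
    rcases pos_or_neg hΔ hrefl with h' | h'
    · exact absurd h' h
    · exact h'
  obtain ⟨p, hp1, hp2, hp3⟩ := exists_repr hβ.2
  obtain ⟨q, hq1, hq2, hq3⟩ := exists_repr hneg.2
  have hsum : Finsupp.linearCombination ℝ id (p + q) =
      Finsupp.linearCombination ℝ id (Finsupp.single α (2 * ⟪β, α⟫ / ⟪α, α⟫)) := by
    rw [map_add, hp3, hq3, Finsupp.linearCombination_single, reflMap_apply, id_eq]
    abel
  have hpq : ↑(p + q).support ⊆ Δ := by
    intro γ hγ
    have hγ' : γ ∈ (p + q).support := hγ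
    rcases Finset.mem_union.mp (Finsupp.support_add hγ') with h' | h'
    · exact hp1 h'
    · exact hq1 h'
  have hs : ↑(Finsupp.single α ((2:ℝ) * ⟪β, α⟫ / ⟪α, α⟫)).support ⊆ Δ := by
    intro γ hγ
    have hγ' : γ ∈ (Finsupp.single α ((2:ℝ) * ⟪β, α⟫ / ⟪α, α⟫)).support := hγ
    have h2 := Finsupp.support_single_subset hγ'
    simp only [Finset.mem_singleton] at h2
    exact h2 ▸ hα
  have heq : p + q = Finsupp.single α (2 * ⟪β, α⟫ / ⟪α, α⟫) := repr_unique hΔ hpq hs hsum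
  have hpγ : ∀ γ, γ ≠ α → p γ = 0 := by
    intro γ hγ
    have h0 := DFunLike.congr_fun heq γ
    rw [Finsupp.add_apply, Finsupp.single_eq_of_ne' (Ne.symm hγ)] at h0
    linarith [hp2 γ, hq2 γ]
  have hp : p = Finsupp.single α (p α) := by
    ext γ
    rcases eq_or_ne γ α with rfl | hγ
    · rw [Finsupp.single_eq_same]
    · rw [hpγ γ hγ, Finsupp.single_eq_of_ne' (Ne.symm hγ)]
  have hβα : β = p α • α := by
    conv_lhs => rw [← hp3, hp]
    rw [Finsupp.linearCombination_single, id_eq]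
  rcases hR.reduced α hαR (p α) (hβα ▸ hβR) with h1 | h1
  · rw [hβα, h1, one_smul]
  · exfalso
    have h2 := hp2 α
    rw [h1] at h2
    linarith

lemma exists_inner_pos (hR : IsRootSystem R) (hΔ : IsBase R Δ)
    (hβ : β ∈ posRoots R Δ) : ∃ α ∈ Δ, 0 < ⟪β, α⟫ := by
  by_contra hcon
  push_neg at hcon
  obtain ⟨p, hp1, hp2, hp3⟩ := exists_repr hβ.2
  have hpos : 0 < ⟪β, β⟫ :=
    lt_of_le_of_ne real_inner_self_nonneg
      (Ne.symm (inner_self_ne_zero.mpr (root_ne_zero hR hβ.1)))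
  have hexp : ⟪β, β⟫ = ∑ γ ∈ p.support, p γ * ⟪β, γ⟫ := by
    calc ⟪β, β⟫ = ⟪β, Finsupp.linearCombination ℝ id p⟫ := by rw [hp3]
      _ = ∑ γ ∈ p.support, p γ * ⟪β, γ⟫ := by
          rw [Finsupp.linearCombination_apply, Finsupp.sum, inner_sum]
          exact Finset.sum_congr rfl fun γ _ => by rw [real_inner_smul_right, id_eq]
  have hle : ∑ γ ∈ p.support, p γ * ⟪β, γ⟫ ≤ 0 :=
    Finset.sum_nonpos fun γ hγ =>
      mul_nonpos_iff.mpr (Or.inl ⟨hp2 γ, hcon γ (hp1 hγ)⟩)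
  linarith

lemma posFun_inv_pos (hR : IsRootSystem R) (hΔ : IsBase R Δ) (hJ₀ : J₀ ⊆ Δ)
    {w : V ≃ₗ[ℝ] V} (hw' : ∀ γ ∈ J₀, 0 < posFun hΔ (w⁻¹ γ))
    (hβ : β ∈ posRoots R Δ)
    (hspan : β ∈ (Submodule.span ℝ J₀ : Submodule ℝ V)) :
    0 < posFun hΔ (w⁻¹ β) := by
  classical
  obtain ⟨p, hp1, hp2, hp3⟩ := exists_repr hβ.2
  obtain ⟨q, hq1, hq2⟩ := Submodule.mem_span_set.mp hspan
  have hq3 : Finsupp.linearCombination ℝ id q = β := by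
    rw [Finsupp.linearCombination_apply]
    exact hq2
  have hpq : p = q := repr_unique hΔ hp1 (hq1.trans hJ₀) (hp3.trans hq3.symm)
  have hwβ : w⁻¹ β = ∑ γ ∈ p.support, p γ • w⁻¹ γ := by
    conv_lhs => rw [show β = Finsupp.linearCombination ℝ id p from hp3.symm]
    rw [Finsupp.linearCombination_apply, Finsupp.sum, map_sum]
    exact Finset.sum_congr rfl fun γ _ => by rw [map_smul, id_eq]
  rw [hwβ, map_sum]
  have hsupp : p.support.Nonempty := by
    rw [Finsupp.support_nonempty_iff]
    intro h0
    rw [h0, map_zero] at hp3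
    exact root_ne_zero hR hβ.1 hp3.symm
  obtain ⟨γ₀, hγ₀⟩ := hsupp
  have hmemJ : ∀ γ, γ ∈ p.support → γ ∈ J₀ := by
    intro γ hγ
    rw [hpq] at hγ
    exact hq1 hγ
  refine Finset.sum_pos' (fun γ hγ => ?_) ⟨γ₀, hγ₀, ?_⟩
  · rw [map_smul, smul_eq_mul]
    exact mul_nonneg (hp2 γ) (le_of_lt (hw' γ (hmemJ γ hγ)))
  · rw [map_smul, smul_eq_mul]
    have hpγ : 0 < p γ₀ := lt_of_le_of_ne (hp2 γ₀) (Ne.symm (Finsupp.mem_support_iff.mp hγ₀))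
    exact mul_pos hpγ (hw' γ₀ (hmemJ γ₀ hγ₀))

end SnegAux

namespace SnegAux

variable {R Δ J₀ : Set V}

lemma descent_root (hR : IsRootSystem R) (hΔ : IsBase R Δ) {β : V}
    (hβ : β ∈ posRoots R Δ) (hβΔ : β ∉ Δ) :
    ∃ α ∈ Δ, ∃ β' ∈ posRoots R Δ,
      posFun hΔ β' < posFun hΔ β ∧ sE β = sE α * sE β' * sE α := by
  obtain ⟨α, hαΔ, hinner⟩ := exists_inner_pos hR hΔ hβ
  have hne : β ≠ α := fun h => hβΔ (h ▸ hαΔ)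
  have hαne : α ≠ 0 := root_ne_zero hR (hΔ.subset hαΔ)
  have hαα : 0 < ⟪α, α⟫ :=
    lt_of_le_of_ne real_inner_self_nonneg (Ne.symm (inner_self_ne_zero.mpr hαne))
  set β' := reflMap α β with hβ'
  have hβ'pos : β' ∈ posRoots R Δ := by
    by_contra h'
    exact hne (eq_of_reflMap_not_pos hR hΔ hαΔ hβ h')
  have hc : 0 < 2 * ⟪β, α⟫ / ⟪α, α⟫ := div_pos (by linarith) hαα
  have hf : posFun hΔ β' < posFun hΔ β := by
    rw [hβ', reflMap_apply, map_sub, map_smul, smul_eq_mul, posFun_eq_one hΔ hαΔ, mul_one]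
    linarith
  have hββ' : sE α β' = β := reflMap_involutive α β
  refine ⟨α, hαΔ, β', hβ'pos, hf, ?_⟩
  rw [← hββ', sE_conj (sE_mem hαΔ), sE_inv]

lemma sE_mem_weylΔ_of_pos (hR : IsRootSystem R) (hΔ : IsBase R Δ) :
    ∀ n : ℕ, ∀ β ∈ posRoots R Δ,
      ({γ ∈ posRoots R Δ | posFun hΔ γ < posFun hΔ β}).ncard ≤ n →
        sE β ∈ weylGroup Δ := by
  intro n
  induction n with
  | zero =>
    intro β hβ hcard
    by_cases hβΔ : β ∈ Δ
    · exact sE_mem hβΔ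
    · exfalso
      obtain ⟨α, hαΔ, β', hβ', hf, -⟩ := descent_root hR hΔ hβ hβΔ
      have hmem : β' ∈ {γ ∈ posRoots R Δ | posFun hΔ γ < posFun hΔ β} := ⟨hβ', hf⟩
      have hfin : ({γ ∈ posRoots R Δ | posFun hΔ γ < posFun hΔ β}).Finite :=
        hR.finite.subset (fun x hx => hx.1.1)
      have := Set.ncard_pos hfin |>.mpr ⟨β', hmem⟩
      omega
  | succ n ih =>
    intro β hβ hcard
    by_cases hβΔ : β ∈ Δ
    · exact sE_mem hβΔ
    · obtain ⟨α, hαΔ, β', hβ', hf, hconj⟩ := descent_root hR hΔ hβ hβΔ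
      have hfin : ({γ ∈ posRoots R Δ | posFun hΔ γ < posFun hΔ β}).Finite :=
        hR.finite.subset (fun x hx => hx.1.1)
      have hsub : {γ ∈ posRoots R Δ | posFun hΔ γ < posFun hΔ β'} ⊆
          {γ ∈ posRoots R Δ | posFun hΔ γ < posFun hΔ β} :=
        fun γ hγ => ⟨hγ.1, lt_trans hγ.2 hf⟩
      have hss : {γ ∈ posRoots R Δ | posFun hΔ γ < posFun hΔ β'} ⊂
          {γ ∈ posRoots R Δ | posFun hΔ γ < posFun hΔ β} :=
        (Set.ssubset_iff_of_subset hsub).mpr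
          ⟨β', ⟨hβ', hf⟩, fun h => lt_irrefl _ h.2⟩
      have hlt := Set.ncard_lt_ncard hss hfin
      have hcard' : ({γ ∈ posRoots R Δ | posFun hΔ γ < posFun hΔ β'}).ncard ≤ n := by omega
      have hβ'W := ih β' hβ' hcard'
      rw [hconj]
      exact mul_mem (mul_mem (sE_mem hαΔ) hβ'W) (sE_mem hαΔ)

lemma sE_mem_weylΔ (hR : IsRootSystem R) (hΔ : IsBase R Δ) (hβR : β ∈ R) :
    sE β ∈ weylGroup Δ := by
  rcases pos_or_neg hΔ hβR with h | h
  · exact sE_mem_weylΔ_of_pos hR hΔ _ β h le_rfl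
  · rw [← neg_neg β, sE_neg]
    exact sE_mem_weylΔ_of_pos hR hΔ _ (-β) h le_rfl

lemma weylR_le_weylΔ (hR : IsRootSystem R) (hΔ : IsBase R Δ) :
    weylGroup R ≤ weylGroup Δ := by
  rw [weylGroup, Subgroup.closure_le]
  rintro g ⟨α, hα, hgα⟩
  have : g = sE α := gen_eq hgα
  rw [this]
  exact sE_mem_weylΔ hR hΔ hα

lemma weylΔ_le_weylR (hsub : Δ ⊆ R) : weylGroup Δ ≤ weylGroup R :=
  Subgroup.closure_mono (fun g hg => by
    obtain ⟨α, hα, hgα⟩ := hg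
    exact ⟨α, hsub hα, hgα⟩)

lemma exists_list {w : V ≃ₗ[ℝ] V} (hw : w ∈ weylGroup Δ) :
    ∃ l : List V, (∀ a ∈ l, a ∈ Δ) ∧ (l.map sE).prod = w := by
  induction hw using Subgroup.closure_induction with
  | mem g hg =>
    obtain ⟨α, hα, hgα⟩ := hg
    refine ⟨[α], by simp [hα], ?_⟩
    rw [List.map_singleton, List.prod_singleton, gen_eq hgα]
  | one => exact ⟨[], by simp, by simp⟩
  | mul g h _ _ ihg ihh =>
    obtain ⟨l₁, h1, h2⟩ := ihg
    obtain ⟨l₂, h3, h4⟩ := ihh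
    refine ⟨l₁ ++ l₂, fun a ha => ?_, by rw [List.map_append, List.prod_append, h2, h4]⟩
    rcases List.mem_append.mp ha with h | h
    · exact h1 a h
    · exact h3 a h
  | inv g _ ih =>
    obtain ⟨l, h1, h2⟩ := ih
    refine ⟨l.reverse, fun a ha => h1 a (List.mem_reverse.mp ha), ?_⟩
    rw [← h2, List.prod_inv_reverse, List.map_map]
    have hfn : (Inv.inv ∘ sE) = (sE : V → V ≃ₗ[ℝ] V) := funext fun a => sE_inv a
    rw [hfn, List.map_reverse]

lemma descent_list (hR : IsRootSystem R) (hΔ : IsBase R Δ) :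
    ∀ l : List V, (∀ a ∈ l, a ∈ Δ) → ∀ t, t ∈ Δ →
      ((l.map sE).prod) t ∉ posRoots R Δ →
      ∃ l₂ : List V, (∀ a ∈ l₂, a ∈ Δ) ∧
        (l₂.map sE).prod = (l.map sE).prod * sE t ∧ l₂.length + 1 = l.length := by
  intro l
  induction l with
  | nil =>
    intro _ t ht hnot
    exact absurd (show (1 : V ≃ₗ[ℝ] V) t ∈ posRoots R Δ from mem_posRoots hΔ ht) (by simpa using hnot)
  | cons a rest ih =>
    intro hmem t ht hnot
    have haΔ : a ∈ Δ := hmem a List.mem_cons_self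
    have hrest : ∀ x ∈ rest, x ∈ Δ := fun x hx => hmem x (List.mem_cons_of_mem a hx)
    have hfull : ((a :: rest).map sE).prod = sE a * (rest.map sE).prod := by
      rw [List.map_cons, List.prod_cons]
    by_cases hpt : (rest.map sE).prod t ∈ posRoots R Δ
    · have hnot' : reflMap a ((rest.map sE).prod t) ∉ posRoots R Δ := by
        rw [hfull, mul_apply, sE_apply] at hnot
        exact hnot
      have hpta : (rest.map sE).prod t = a := eq_of_reflMap_not_pos hR hΔ haΔ hpt hnot'
      have hpW : (rest.map sE).prod ∈ weylGroup Δ := by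
        apply Subgroup.list_prod_mem
        intro g hg
        obtain ⟨x, hx, rfl⟩ := List.mem_map.mp hg
        exact sE_mem (hrest x hx)
      have hconj : sE a = (rest.map sE).prod * sE t * ((rest.map sE).prod)⁻¹ := by
        rw [← hpta]
        exact sE_conj hpW t
      refine ⟨rest, hrest, ?_, by simp⟩
      rw [hfull, hconj, mul_assoc ((rest.map sE).prod * sE t), inv_mul_cancel, mul_one,
        mul_assoc, sE_mul_self, mul_one]
    · obtain ⟨l₂', hm, hprod, hlen⟩ := ih hrest t ht hpt
      refine ⟨a :: l₂', fun x hx => ?_, ?_, ?_⟩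
      · rcases List.mem_cons.mp hx with rfl | hx
        · exact haΔ
        · exact hm x hx
      · rw [List.map_cons, List.prod_cons, hprod, hfull, mul_assoc]
      · simp only [List.length_cons]
        omega

lemma eq_one_of_maps_pos (hR : IsRootSystem R) (hΔ : IsBase R Δ) :
    ∀ n : ℕ, ∀ l : List V, l.length ≤ n → (∀ a ∈ l, a ∈ Δ) →
      (∀ α ∈ Δ, ((l.map sE).prod) α ∈ posRoots R Δ) → (l.map sE).prod = 1 := by
  intro n
  induction n with
  | zero =>
    intro l hl _ _
    rw [List.length_eq_zero_iff.mp (Nat.le_zero.mp hl)]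
    simp
  | succ n ih =>
    intro l hl hmem hpos
    rcases List.eq_nil_or_concat' l with rfl | ⟨L, t, rfl⟩
    · simp
    · have htΔ : t ∈ Δ := hmem t (by simp)
      have hLmem : ∀ a ∈ L, a ∈ Δ := fun a ha => hmem a (by simp [ha])
      have hfull : ((L ++ [t]).map sE).prod = (L.map sE).prod * sE t := by
        rw [List.map_append, List.prod_append, List.map_singleton, List.prod_singleton]
      have hPW : (L.map sE).prod ∈ weylGroup Δ := by
        apply Subgroup.list_prod_mem
        intro g hg
        obtain ⟨x, hx, rfl⟩ := List.mem_map.mp hg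
        exact sE_mem (hLmem x hx)
      have hPt : (L.map sE).prod t ∈ R :=
        weyl_root hR (weylΔ_le_weylR hΔ.subset hPW) t (hΔ.subset htΔ)
      have hwt : ((L ++ [t]).map sE).prod t = -((L.map sE).prod t) := by
        rw [hfull, mul_apply, sE_apply, reflMap_self, map_neg]
      have h1 : -((L.map sE).prod t) ∈ posRoots R Δ := hwt ▸ hpos t htΔ
      have hPtnot : (L.map sE).prod t ∉ posRoots R Δ := fun h => neg_not_pos hΔ h h1
      obtain ⟨l₂, hm2, hprod2, hlen2⟩ := descent_list hR hΔ L hLmem t htΔ hPtnot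
      have hfe : (l₂.map sE).prod = ((L ++ [t]).map sE).prod := by rw [hprod2, hfull]
      have hl2 : l₂.length ≤ n := by
        have hh : (L ++ [t]).length ≤ n + 1 := hl
        simp only [List.length_append, List.length_singleton] at hh
        omega
      have hone := ih l₂ hl2 hm2 (fun α hα => by rw [hfe]; exact hpos α hα)
      rw [← hfe, hone]

end SnegAux

open SnegAux in
/-- §9.2, Corollary on the partition of `Δ`, part (1):
for every `w` in `W' = {w ∈ W : w⁻¹·J₀ ⊆ R⁺}` (the set of minimal-length coset
representatives of `W_{J₀}\W`), the set `S_w⁻` is empty if and only if `w = 1`. -/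
theorem Sneg_empty_iff_eq_one
    [FiniteDimensional ℝ V] (R Δ J₀ : Set V)
    (hR : IsRootSystem R) (hΔ : IsBase R Δ) (hJ₀ : J₀ ⊆ Δ)
    (w : V ≃ₗ[ℝ] V) (hw : w ∈ weylGroup R)
    (hw' : ∀ α ∈ J₀, w⁻¹ α ∈ posRoots R Δ) :
    Sneg R Δ J₀ w = ∅ ↔ w = 1 := by
  constructor
  · intro hS
    have hpos : ∀ α ∈ Δ, w α ∈ posRoots R Δ := by
      intro α hα
      by_contra hcon
      have hαR : α ∈ R := hΔ.subset hα
      have hwα : w α ∈ R := weyl_root hR hw α hαR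
      have hneg : -(w α) ∈ posRoots R Δ := by
        rcases pos_or_neg hΔ hwα with h' | h'
        · exact absurd h' hcon
        · exact h'
      have hnotin : w α ∉ rootsIn R J₀ := by
        intro hin
        have hspan : -(w α) ∈ (Submodule.span ℝ J₀ : Submodule ℝ V) := neg_mem hin.2
        have hfw : ∀ γ ∈ J₀, 0 < posFun hΔ (w⁻¹ γ) :=
          fun γ hγ => posFun_pos hR hΔ (hw' γ hγ)
        have hposf := posFun_inv_pos hR hΔ hJ₀ hfw hneg hspan
        have hwinv : w⁻¹ (-(w α)) = -α := by
          rw [map_neg, ← mul_apply, inv_mul_cancel, one_apply]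
        rw [hwinv, map_neg, posFun_eq_one hΔ hα] at hposf
        linarith
      have hmem : α ∈ Sneg R Δ J₀ w := ⟨hα, hneg, hnotin⟩
      rw [hS] at hmem
      exact hmem
    obtain ⟨l, hl1, hl2⟩ := exists_list (weylR_le_weylΔ hR hΔ hw)
    have hone := eq_one_of_maps_pos hR hΔ l.length l le_rfl hl1
      (fun α hα => by rw [hl2]; exact hpos α hα)
    rw [← hl2, hone]
  · rintro rfl
    rw [Set.eq_empty_iff_forall_notMem]
    rintro α ⟨hα, hneg, -⟩
    exact neg_not_pos hΔ (mem_posRoots hΔ hα) hneg
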